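/- arXiv:2502.08998 — 2 statements merged into one kernel-verified Lean document; each statement's English description precedes it below -/
import Mathlib

section
/- Let E, P, Y be vector spaces over ℝ, let F : E × P → Y be a linear map, let Z be a subspace of Y, and let W be a subspace of E × P. Assume: (a) the range of F together with Z spans Y, i.e. F(E × P) + Z = Y; (b) F maps W into Z, i.e. F(W) ⊆ Z; and (c) the projection (x,p) ↦ p maps W onto P. Then F(E × {0}) + Z = Y, i.e. the image under F of the subspace E × {0} together with Z spans Y. -/
/-- Linear-algebraic core of the Foliated Parametric Transversality Theorem (Theorem 5.2). -/
theorem stmt_1 (E P Y : Type*) [AddCommGroup E] [Module ℝ E] [AddCommGroup P] [Module ℝ P]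
    [AddCommGroup Y] [Module ℝ Y] (F : (E × P) →ₗ[ℝ] Y) (Z : Submodule ℝ Y)
    (W : Submodule ℝ (E × P))
    (ha : LinearMap.range F ⊔ Z = ⊤)
    (hb : W.map F ≤ Z)
    (hc : W.map (LinearMap.snd ℝ E P) = ⊤) :
    Submodule.map F ((⊤ : Submodule ℝ E).prod (⊥ : Submodule ℝ P)) ⊔ Z = ⊤ := by
  rw [eq_top_iff]
  intro y _
  have hy : y ∈ LinearMap.range F ⊔ Z := ha ▸ Submodule.mem_top
  rcases Submodule.mem_sup.mp hy with ⟨f, ⟨⟨e, p⟩, rfl⟩, z, hz, rfl⟩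
  have hp : p ∈ W.map (LinearMap.snd ℝ E P) := hc ▸ Submodule.mem_top
  rcases hp with ⟨⟨w1, w2⟩, hw, hw2⟩
  simp only [LinearMap.snd_apply] at hw2
  subst hw2
  have h1 : F (e - w1, 0) ∈ Submodule.map F ((⊤ : Submodule ℝ E).prod ⊥) :=
    ⟨(e - w1, 0), ⟨trivial, rfl⟩, rfl⟩
  have h2 : F (w1, w2) ∈ Z := hb ⟨(w1, w2), hw, rfl⟩
  have key : F (e, w2) + z = F (e - w1, 0) + (F (w1, w2) + z) := by
    rw [← add_assoc, ← map_add]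
    congr 1
    · congr 1; simp [Prod.ext_iff]
  rw [key]
  exact Submodule.mem_sup.mpr ⟨_, h1, _, Z.add_mem h2 hz, rfl⟩
end

section
/- Let p : ℝ → ℝ be differentiable at every v > 0 with p'(v) < 0 for all v > 0. Fix (u_g, v_g) ∈ ℝ × (0,∞) and define H : ℝ × (0,∞) → ℝ by H(u,v) = (u − u_g)² + (p(v) − p(v_g))·(v − v_g). Then for every (u,v) ∈ ℝ × (0,∞) with (u,v) ≠ (u_g, v_g) and H(u,v) = 0, the gradient of H at (u,v), namely the vector (2(u − u_g), p'(v)·(v − v_g) + p(v) − p(v_g)), is not the zero vector. -/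
/-- Regular manifold assumption for the p-system: the gradient of the Hugoniot objective
function is nonzero at every point of the punctured Hugoniot locus (Section 6). -/
theorem stmt_15 (p : ℝ → ℝ) (hdiff : ∀ v > (0 : ℝ), DifferentiableAt ℝ p v)
    (hneg : ∀ v > (0 : ℝ), deriv p v < 0) (ug vg : ℝ) (hvg : 0 < vg) :
    ∀ u v : ℝ, 0 < v → (u, v) ≠ (ug, vg) →
      (u - ug) ^ 2 + (p v - p vg) * (v - vg) = 0 →
      (2 * (u - ug), deriv p v * (v - vg) + p v - p vg) ≠ ((0 : ℝ), (0 : ℝ)) := by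
  have hanti : StrictAntiOn p (Set.Ioi (0 : ℝ)) := by
    apply strictAntiOn_of_deriv_neg (convex_Ioi 0)
    · exact fun x hx => (hdiff x hx).continuousAt.continuousWithinAt
    · intro x hx
      rw [interior_Ioi] at hx
      exact hneg x hx
  intro u v hv hne hH hgrad
  have h1 : 2 * (u - ug) = 0 := congrArg Prod.fst hgrad
  have hu : u = ug := by linarith
  rw [hu, sub_self, zero_pow (by norm_num), zero_add] at hH
  have hvvg : v = vg := by
    by_contra h
    rcases lt_or_gt_of_ne h with hlt | hgt
    · have := hanti (Set.mem_Ioi.mpr hv) (Set.mem_Ioi.mpr hvg) hlt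
      nlinarith
    · have := hanti (Set.mem_Ioi.mpr hvg) (Set.mem_Ioi.mpr hv) hgt
      nlinarith
  exact hne (by rw [hu, hvvg])
end
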